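/- Let g be a smooth Riemannian metric on an open set U ⊆ E, let f : E → ℝ be smooth with g-gradient G, let λ ∈ ℝ be a constant, and let Γ be a connection on U that straightens f with constant factor λ, with non-metricity tensor C. Let γ₁, γ₂ : ℝ → U be two gradient descent curves of f such that f (γ₁ 0) = f (γ₂ 0), and such that f ∘ γ₁ and f ∘ γ₂ both tend to the same limit m as t → ∞. Assume that for every t > 0 at which the descent speeds agree, i.e. g (γ₁ t) (deriv γ₁ t) (deriv γ₁ t) = g (γ₂ t) (deriv γ₂ t) (deriv γ₂ t), one has the strict inequality C (γ₁ t) (deriv γ₁ t) (deriv γ₁ t) (deriv γ₁ t) < C (γ₂ t) (deriv γ₂ t) (deriv γ₂ t) (deriv γ₂ t). Then f (γ₁ t) ≤ f (γ₂ t) for all t ≥ 0, i.e. γ₁ is faster than γ₂. -/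

import Mathlib

open scoped Topology

noncomputable section

/-- `E n` is the Euclidean space `ℝ^n`. -/
abbrev E (n : ℕ) := EuclideanSpace ℝ (Fin n)

lemma fderiv_apply2 {n : ℕ} {U : Set (E n)} (hU : IsOpen U)
    {g : E n → E n →L[ℝ] E n →L[ℝ] ℝ}
    (hg_smooth : ContDiffOn ℝ (⊤ : ℕ∞) g U)
    {x : E n} (hx : x ∈ U) (u v w : E n) :
    fderiv ℝ (fun y => g y u v) x w = fderiv ℝ g x w u v := by
  have hgd : HasFDerivAt g (fderiv ℝ g x) x :=
    (((hg_smooth.differentiableOn (by simp)).differentiableAt (hU.mem_nhds hx))).hasFDerivAt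
  set L : (E n →L[ℝ] E n →L[ℝ] ℝ) →L[ℝ] ℝ :=
    (ContinuousLinearMap.apply ℝ ℝ v).comp (ContinuousLinearMap.apply ℝ (E n →L[ℝ] ℝ) u)
  have h : HasFDerivAt (fun y => g y u v) (L.comp (fderiv ℝ g x)) x := by
    have := (hgd.clm_apply (hasFDerivAt_const u x)).clm_apply (hasFDerivAt_const v x)
    convert this using 1
    any_goals rfl
    ext w
    simp [L]
  rw [h.fderiv]; rfl

lemma hasDerivAt_speed {n : ℕ} {U : Set (E n)} (hU : IsOpen U)
    {g : E n → E n →L[ℝ] E n →L[ℝ] ℝ}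
    (hg_smooth : ContDiffOn ℝ (⊤ : ℕ∞) g U)
    (hg_symm : ∀ x ∈ U, ∀ u v : E n, g x u v = g x v u)
    {G : E n → E n} (hG_smooth : ContDiffOn ℝ (⊤ : ℕ∞) G U)
    {lam : ℝ} {Γ : E n → E n →L[ℝ] E n →L[ℝ] E n}
    (hstr : ∀ x ∈ U, fderiv ℝ G x (G x) + Γ x (G x) (G x) = lam • G x)
    {C : E n → E n → E n → E n → ℝ}
    (hC : ∀ x ∈ U, ∀ w u v : E n,
      C x w u v = fderiv ℝ (fun y => g y u v) x w - g x (Γ x w u) v - g x u (Γ x w v))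
    {γ : ℝ → E n} (hγU : ∀ t, γ t ∈ U) (hγC1 : ContDiff ℝ 1 γ)
    {t : ℝ} (hd : deriv γ t = -G (γ t)) :
    HasDerivAt (fun s => g (γ s) (G (γ s)) (G (γ s)))
      (C (γ t) (deriv γ t) (deriv γ t) (deriv γ t)
        - 2 * lam * g (γ t) (G (γ t)) (G (γ t))) t := by
  set x := γ t with hxdef
  have hx : x ∈ U := hγU t
  have hγd : HasDerivAt γ (deriv γ t) t := (hγC1.differentiable one_ne_zero t).hasDerivAt
  have hgd : HasFDerivAt g (fderiv ℝ g x) x :=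
    ((hg_smooth.differentiableOn (by simp)).differentiableAt (hU.mem_nhds hx)).hasFDerivAt
  have hGd : HasFDerivAt G (fderiv ℝ G x) x :=
    ((hG_smooth.differentiableOn (by simp)).differentiableAt (hU.mem_nhds hx)).hasFDerivAt
  have step1 := hgd.clm_apply hGd
  have step2 := step1.clm_apply hGd
  have hσ : HasDerivAt (fun s => g (γ s) (G (γ s)) (G (γ s)))
      (((g x (G x)).comp (fderiv ℝ G x)
        + ((g x).comp (fderiv ℝ G x) + (fderiv ℝ g x).flip (G x)).flip (G x)) (deriv γ t)) t :=
    step2.comp_hasDerivAt t hγd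
  convert hσ using 1
  -- now pure algebra
  have happ : ((g x (G x)).comp (fderiv ℝ G x)
        + ((g x).comp (fderiv ℝ G x) + (fderiv ℝ g x).flip (G x)).flip (G x)) (deriv γ t)
      = g x (G x) (fderiv ℝ G x (deriv γ t)) + g x (fderiv ℝ G x (deriv γ t)) (G x)
        + fderiv ℝ g x (deriv γ t) (G x) (G x) := by
    simp [ContinuousLinearMap.add_apply, ContinuousLinearMap.comp_apply,
      ContinuousLinearMap.flip_apply]
    ring
  rw [happ, hd]
  have hF : fderiv ℝ G x (G x) = lam • G x - Γ x (G x) (G x) := by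
    have := hstr x hx; linear_combination (norm := module) this
  have hCv : C x (-G x) (-G x) (-G x)
      = - (fderiv ℝ g x (G x) (G x) (G x)) + g x (Γ x (G x) (G x)) (G x)
        + g x (G x) (Γ x (G x) (G x)) := by
    rw [hC x hx, fderiv_apply2 hU hg_smooth hx]
    simp [map_neg, ContinuousLinearMap.map_neg, ContinuousLinearMap.neg_apply]
    try ring
  have hsymm1 : g x (fderiv ℝ G x (G x)) (G x) = g x (G x) (fderiv ℝ G x (G x)) :=
    hg_symm x hx _ _
  have hsymm2 : g x (Γ x (G x) (G x)) (G x) = g x (G x) (Γ x (G x) (G x)) :=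
    hg_symm x hx _ _
  rw [hCv]
  simp only [map_neg, ContinuousLinearMap.map_neg, ContinuousLinearMap.neg_apply, hF,
    map_sub, map_smul, ContinuousLinearMap.map_smul, ContinuousLinearMap.smul_apply,
    ContinuousLinearMap.sub_apply, smul_eq_mul]
  rw [hsymm2] at *
  linarith [hsymm1, hsymm2]

lemma hasDerivAt_fcomp {n : ℕ} {U : Set (E n)}
    {g : E n → E n →L[ℝ] E n →L[ℝ] ℝ}
    {f : E n → ℝ} (hf : ContDiff ℝ (⊤ : ℕ∞) f)
    {G : E n → E n}
    (hG : ∀ x ∈ U, ∀ v : E n, g x (G x) v = fderiv ℝ f x v)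
    {γ : ℝ → E n} (hγU : ∀ t, γ t ∈ U) (hγC1 : ContDiff ℝ 1 γ)
    {t : ℝ} (hd : deriv γ t = -G (γ t)) :
    HasDerivAt (fun s => f (γ s)) (-(g (γ t) (G (γ t)) (G (γ t)))) t := by
  have hγd : HasDerivAt γ (deriv γ t) t := (hγC1.differentiable one_ne_zero t).hasDerivAt
  have hfd : HasFDerivAt f (fderiv ℝ f (γ t)) (γ t) :=
    (hf.differentiable (by simp) (γ t)).hasFDerivAt
  have h := hfd.comp_hasDerivAt t hγd
  convert h using 1
  any_goals rfl
  rw [hd, map_neg, ← hG (γ t) (hγU t), neg_inj]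

/-- **Theorem 2 (asymmetry criterion on Riemannian manifolds).**
Let `Γ` be a connection straightening `f` with constant factor `λ`, with non-metricity tensor `C`.
If `γ₁, γ₂` are gradient descent curves of `f` with `f`-equidistant initial conditions, tending to
a common limit at infinity, and whenever the descent speeds coincide (for `t > 0`) the
non-metricity component along `γ₁` is strictly smaller than along `γ₂`, then `γ₁` is faster
than `γ₂`, i.e. `f (γ₁ t) ≤ f (γ₂ t)` for all `t ≥ 0`. -/
theorem asymmetry_criterion
    (n : ℕ) (hn : 1 ≤ n)
    (U : Set (E n)) (hU : IsOpen U)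
    -- a smooth Riemannian metric on `U`
    (g : E n → E n →L[ℝ] E n →L[ℝ] ℝ)
    (hg_smooth : ContDiffOn ℝ (⊤ : ℕ∞) g U)
    (hg_symm : ∀ x ∈ U, ∀ u v : E n, g x u v = g x v u)
    (hg_pos : ∀ x ∈ U, ∀ v : E n, v ≠ 0 → 0 < g x v v)
    -- a smooth function `f` with `g`-gradient `G`
    (f : E n → ℝ) (hf : ContDiff ℝ (⊤ : ℕ∞) f)
    (G : E n → E n) (hG_smooth : ContDiffOn ℝ (⊤ : ℕ∞) G U)
    (hG : ∀ x ∈ U, ∀ v : E n, g x (G x) v = fderiv ℝ f x v)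
    -- a constant factor `λ`
    (lam : ℝ)
    -- a connection `Γ` on `U` straightening `f` with factor `λ`
    (Γ : E n → E n →L[ℝ] E n →L[ℝ] E n)
    (hΓ_smooth : ContDiffOn ℝ (⊤ : ℕ∞) Γ U)
    (hstr : ∀ x ∈ U, fderiv ℝ G x (G x) + Γ x (G x) (G x) = lam • G x)
    -- the non-metricity tensor `C` of `Γ` relative to `g`
    (C : E n → E n → E n → E n → ℝ)
    (hC : ∀ x ∈ U, ∀ w u v : E n,
      C x w u v = fderiv ℝ (fun y => g y u v) x w - g x (Γ x w u) v - g x u (Γ x w v))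
    -- two gradient descent curves of `f`
    (γ₁ γ₂ : ℝ → E n)
    (hγ₁U : ∀ t : ℝ, γ₁ t ∈ U) (hγ₂U : ∀ t : ℝ, γ₂ t ∈ U)
    (hγ₁C1 : ContDiff ℝ 1 γ₁) (hγ₂C1 : ContDiff ℝ 1 γ₂)
    (hγ₁ : ∀ t : ℝ, 0 ≤ t → deriv γ₁ t = -G (γ₁ t))
    (hγ₂ : ∀ t : ℝ, 0 ≤ t → deriv γ₂ t = -G (γ₂ t))
    -- `f`-equidistant initial conditions
    (heq : f (γ₁ 0) = f (γ₂ 0))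
    -- both relaxations tend to the same limit `m`
    (m : ℝ)
    (hlim₁ : Filter.Tendsto (fun t => f (γ₁ t)) Filter.atTop (nhds m))
    (hlim₂ : Filter.Tendsto (fun t => f (γ₂ t)) Filter.atTop (nhds m))
    -- comparison of the non-metricity tensor at equal descent speeds
    (hcrit : ∀ t : ℝ, 0 < t →
      g (γ₁ t) (deriv γ₁ t) (deriv γ₁ t) = g (γ₂ t) (deriv γ₂ t) (deriv γ₂ t) →
      C (γ₁ t) (deriv γ₁ t) (deriv γ₁ t) (deriv γ₁ t)
        < C (γ₂ t) (deriv γ₂ t) (deriv γ₂ t) (deriv γ₂ t)) :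
    -- `γ₁` is faster than `γ₂`
    ∀ t : ℝ, 0 ≤ t → f (γ₁ t) ≤ f (γ₂ t) := by
  intro t₁ ht₁
  by_contra hlt
  push_neg at hlt
  set σ₁ : ℝ → ℝ := fun s => g (γ₁ s) (G (γ₁ s)) (G (γ₁ s)) with hσ₁def
  set σ₂ : ℝ → ℝ := fun s => g (γ₂ s) (G (γ₂ s)) (G (γ₂ s)) with hσ₂def
  set ψ : ℝ → ℝ := fun s => f (γ₂ s) - f (γ₁ s) with hψdef
  have hψ0 : ψ 0 = 0 := by simp [hψdef, heq]
  have hψt₁ : ψ t₁ < 0 := by simp only [hψdef]; linarith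
  have hψcont : Continuous ψ :=
    (hf.continuous.comp hγ₂C1.continuous).sub (hf.continuous.comp hγ₁C1.continuous)
  have hψderiv : ∀ s : ℝ, 0 ≤ s → HasDerivAt ψ (σ₁ s - σ₂ s) s := by
    intro s hs
    have h1 := hasDerivAt_fcomp hf hG hγ₁U hγ₁C1 (hγ₁ s hs)
    have h2 := hasDerivAt_fcomp hf hG hγ₂U hγ₂C1 (hγ₂ s hs)
    have h := h2.sub h1
    convert h using 1
    any_goals rfl
    simp only [hσ₁def, hσ₂def]
    ring
  have hψlim : Filter.Tendsto ψ Filter.atTop (nhds 0) := by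
    have := hlim₂.sub hlim₁
    simpa using this
  obtain ⟨ε, hεpos, hεle⟩ : ∃ ε : ℝ, 0 < ε ∧ ψ t₁ ≤ -ε :=
    ⟨-ψ t₁, by linarith, by linarith⟩
  have hev : ∀ᶠ s in Filter.atTop, -(ε / 2) < ψ s :=
    hψlim.eventually (eventually_gt_nhds (by linarith))
  obtain ⟨T₀, hT₀⟩ := Filter.eventually_atTop.mp hev
  set T : ℝ := max T₀ t₁ with hTdef
  have ht₁T : t₁ ≤ T := le_max_right _ _
  have hT0 : (0 : ℝ) ≤ T := le_trans ht₁ ht₁T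
  obtain ⟨tm, htm, hmin⟩ := (isCompact_Icc (a := (0:ℝ)) (b := T)).exists_isMinOn
    (Set.nonempty_Icc.mpr hT0) hψcont.continuousOn
  have hmt₁ : ψ tm ≤ ψ t₁ := isMinOn_iff.mp hmin t₁ ⟨ht₁, ht₁T⟩
  have hψtm_neg : ψ tm ≤ -ε := le_trans hmt₁ hεle
  have hglob : ∀ s : ℝ, 0 ≤ s → ψ tm ≤ ψ s := by
    intro s hs
    rcases le_or_gt s T with h | h
    · exact isMinOn_iff.mp hmin s ⟨hs, h⟩
    · have h₂ := hT₀ s (le_trans (le_max_left _ _) h.le)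
      have h3 : -ε < -(ε/2) := by linarith
      exact le_of_lt (lt_trans (lt_of_le_of_lt hψtm_neg h3) h₂)
  have htm0 : 0 < tm := by
    rcases htm.1.lt_or_eq with h | h
    · exact h
    · exfalso; rw [← h] at hψtm_neg; linarith
  have htmT : tm < T := by
    rcases htm.2.lt_or_eq with h | h
    · exact h
    · exfalso
      have h2 := hT₀ T (le_max_left _ _)
      rw [← h] at h2
      have h3 : -ε < -(ε/2) := by linarith
      exact absurd h2 (not_lt.mpr (le_trans hψtm_neg h3.le))
  have hloc : IsLocalMin ψ tm := hmin.isLocalMin (Icc_mem_nhds htm0 htmT)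
  have hψdm := hψderiv tm htm0.le
  have hzero : σ₁ tm = σ₂ tm := by
    have h := hψdm.deriv
    rw [hloc.deriv_eq_zero] at h
    linarith
  have hspeed : g (γ₁ tm) (deriv γ₁ tm) (deriv γ₁ tm)
      = g (γ₂ tm) (deriv γ₂ tm) (deriv γ₂ tm) := by
    rw [hγ₁ tm htm0.le, hγ₂ tm htm0.le]
    simpa [hσ₁def, hσ₂def] using hzero
  have hC12 := hcrit tm htm0 hspeed
  have hs1 := hasDerivAt_speed hU hg_smooth hg_symm hG_smooth hstr hC hγ₁U hγ₁C1
    (hγ₁ tm htm0.le)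
  have hs2 := hasDerivAt_speed hU hg_smooth hg_symm hG_smooth hstr hC hγ₂U hγ₂C1
    (hγ₂ tm htm0.le)
  set L : ℝ := C (γ₁ tm) (deriv γ₁ tm) (deriv γ₁ tm) (deriv γ₁ tm)
    - C (γ₂ tm) (deriv γ₂ tm) (deriv γ₂ tm) (deriv γ₂ tm) with hLdef
  have hL : L < 0 := by simp only [hLdef]; linarith
  have hφd : HasDerivAt (fun s => σ₁ s - σ₂ s) L tm := by
    have h := hs1.sub hs2
    convert h using 1
    any_goals rfl
    have : σ₁ tm = g (γ₁ tm) (G (γ₁ tm)) (G (γ₁ tm)) := rfl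
    have h2 : σ₂ tm = g (γ₂ tm) (G (γ₂ tm)) (G (γ₂ tm)) := rfl
    rw [hLdef, ← this, ← h2, hzero]
    ring
  have hφtm : σ₁ tm - σ₂ tm = 0 := by rw [hzero]; ring
  -- slope argument: σ₁ - σ₂ < 0 just to the right of tm
  have hslope := hasDerivAt_iff_tendsto_slope.mp hφd
  have hslope' : Filter.Tendsto (slope (fun s => σ₁ s - σ₂ s) tm) (𝓝[>] tm) (𝓝 L) :=
    hslope.mono_left (nhdsWithin_mono _ (by intro x hx; exact ne_of_gt hx))
  have hevs : ∀ᶠ s in 𝓝[>] tm, slope (fun s => σ₁ s - σ₂ s) tm s < 0 :=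
    hslope'.eventually (eventually_lt_nhds hL)
  have hevφ : ∀ᶠ s in 𝓝[>] tm, σ₁ s - σ₂ s < 0 := by
    filter_upwards [hevs, self_mem_nhdsWithin] with s hsl hs
    rw [slope_def_field] at hsl
    have hpos : 0 < s - tm := sub_pos.mpr hs
    have := div_neg_iff.mp (by
      rw [hφtm, sub_zero] at hsl
      exact hsl)
    rcases this with ⟨h1, h2⟩ | ⟨h1, h2⟩
    · linarith
    · linarith
  obtain ⟨b, hb, hIoc⟩ := mem_nhdsGT_iff_exists_Ioc_subset.mp hevφ
  have hbtm : tm < b := hb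
  have hanti : StrictAntiOn ψ (Set.Icc tm b) := by
    apply strictAntiOn_of_deriv_neg (convex_Icc tm b) hψcont.continuousOn
    intro s hs
    rw [interior_Icc] at hs
    have hs0 : 0 ≤ s := le_trans htm0.le hs.1.le
    rw [(hψderiv s hs0).deriv]
    exact hIoc ⟨hs.1, hs.2.le⟩
  have hcon : ψ b < ψ tm :=
    hanti (Set.left_mem_Icc.mpr hbtm.le) (Set.right_mem_Icc.mpr hbtm.le) hbtm
  have := hglob b (le_trans htm0.le hbtm.le)
  linarith

end
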